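/- Let 0 < c < 1/2. The map J(u) = √(c/2)·(u − 1/u) is an analytic bijection from the punctured open unit disc 𝔻* = {u ∈ ℂ : 0 < |u| < 1} onto ℂ ∖ i[−√(2c), √(2c)], with inverse G; that is, for every w ∈ ℂ ∖ i[−√(2c), √(2c)] one has G(w) ∈ 𝔻* and J(G(w)) = w, and for every u ∈ 𝔻* one has G(J(u)) = u. -/

import Mathlib

noncomputable section

/-- Principal-branch complex square root. -/
def csqrt (z : ℂ) : ℂ := z ^ ((1:ℂ)/2)

/-- The branch of `√(w² + 2c)` defined by
`√(w² + 2c) := i·√(−√(2c) − i w)·√(√(2c) − i w)` with principal-branch square roots. -/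
def sqrtc (c : ℝ) (w : ℂ) : ℂ :=
  Complex.I * csqrt (-(Real.sqrt (2*c) : ℂ) - Complex.I * w) *
    csqrt ((Real.sqrt (2*c) : ℂ) - Complex.I * w)

/-- `G(w) = (1/√(2c))·(w − √(w² + 2c))`. -/
def Gfun (c : ℝ) (w : ℂ) : ℂ := ((Real.sqrt (2*c) : ℂ))⁻¹ * (w - sqrtc c w)

/-- `J(u) = √(c/2)·(u − 1/u)`. -/
def Jfun (c : ℝ) (u : ℂ) : ℂ := (Real.sqrt (c/2) : ℂ) * (u - 1/u)

/-- The punctured open unit disc `𝔻* = {u ∈ ℂ : 0 < |u| < 1}`. -/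
def punctDisc : Set ℂ := {u : ℂ | 0 < ‖u‖ ∧ ‖u‖ < 1}

/-- The vertical segment `i[−√(2c), √(2c)] = {i y : −√(2c) ≤ y ≤ √(2c)}`. -/
def slit (c : ℝ) : Set ℂ :=
  {z : ℂ | ∃ y : ℝ, -Real.sqrt (2*c) ≤ y ∧ y ≤ Real.sqrt (2*c) ∧ z = Complex.I * y}

lemma csqrt_sq (z : ℂ) : csqrt z ^ 2 = z := by
  have h := Complex.cpow_nat_inv_pow z (n := 2) two_ne_zero
  simpa [csqrt, one_div] using h

lemma csqrt_re (z : ℂ) : (csqrt z).re = Real.sqrt ((‖z‖ + z.re)/2) := by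
  rw [csqrt, one_div]; exact Complex.cpow_inv_two_re z

lemma csqrt_im_of_nonneg {z : ℂ} (h : 0 ≤ z.im) :
    (csqrt z).im = Real.sqrt ((‖z‖ - z.re)/2) := by
  rw [csqrt, one_div]; exact Complex.cpow_inv_two_im_eq_sqrt h

lemma csqrt_im_of_neg {z : ℂ} (h : z.im < 0) :
    (csqrt z).im = -Real.sqrt ((‖z‖ - z.re)/2) := by
  rw [csqrt, one_div]; exact Complex.cpow_inv_two_im_eq_neg_sqrt h

lemma csqrt_re_nonneg (z : ℂ) : 0 ≤ (csqrt z).re := by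
  rw [csqrt_re]; exact Real.sqrt_nonneg _

-- quadrant lemma
lemma dot_pos {z w : ℂ}
    (h : (z.im < 0 ∧ w.im < 0) ∨ (0 < z.im ∧ 0 < w.im) ∨
      (z.im = 0 ∧ w.im = 0 ∧ 0 < z.re ∧ 0 < w.re) ∨
      (z.im = 0 ∧ w.im = 0 ∧ z.re < 0 ∧ w.re < 0)) :
    0 < (csqrt z).re * (csqrt w).re + (csqrt z).im * (csqrt w).im := by
  have habs : ∀ u : ℂ, u.im = 0 → ‖u‖ = |u.re| := by
    intro u hu
    rw [Complex.norm_def, Complex.normSq_apply, hu]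
    simpa using Real.sqrt_mul_self_eq_abs u.re
  rcases h with ⟨hz, hw⟩ | ⟨hz, hw⟩ | ⟨hz, hw, hz', hw'⟩ | ⟨hz, hw, hz', hw'⟩
  · have h1 : (csqrt z).im < 0 := by
      rw [csqrt_im_of_neg hz]
      have : |z.re| < ‖z‖ := Complex.abs_re_lt_norm.2 (ne_of_lt hz)
      have : 0 < (‖z‖ - z.re)/2 := by
        have := le_abs_self z.re; linarith
      simpa using Real.sqrt_pos.2 this
    have h2 : (csqrt w).im < 0 := by
      rw [csqrt_im_of_neg hw]
      have : |w.re| < ‖w‖ := Complex.abs_re_lt_norm.2 (ne_of_lt hw)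
      have : 0 < (‖w‖ - w.re)/2 := by
        have := le_abs_self w.re; linarith
      simpa using Real.sqrt_pos.2 this
    nlinarith [csqrt_re_nonneg z, csqrt_re_nonneg w, mul_pos_of_neg_of_neg h1 h2]
  · have h1 : 0 < (csqrt z).im := by
      rw [csqrt_im_of_nonneg hz.le]
      have : |z.re| < ‖z‖ := Complex.abs_re_lt_norm.2 (ne_of_gt hz)
      have : 0 < (‖z‖ - z.re)/2 := by
        have := le_abs_self z.re; linarith
      exact Real.sqrt_pos.2 this
    have h2 : 0 < (csqrt w).im := by
      rw [csqrt_im_of_nonneg hw.le]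
      have : |w.re| < ‖w‖ := Complex.abs_re_lt_norm.2 (ne_of_gt hw)
      have : 0 < (‖w‖ - w.re)/2 := by
        have := le_abs_self w.re; linarith
      exact Real.sqrt_pos.2 this
    nlinarith [csqrt_re_nonneg z, csqrt_re_nonneg w, mul_pos h1 h2]
  · -- both positive real
    have h1 : 0 < (csqrt z).re := by
      rw [csqrt_re, habs z hz, abs_of_pos hz']
      exact Real.sqrt_pos.2 (by linarith)
    have h2 : 0 < (csqrt w).re := by
      rw [csqrt_re, habs w hw, abs_of_pos hw']
      exact Real.sqrt_pos.2 (by linarith)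
    have h3 : (csqrt z).im = 0 := by
      rw [csqrt_im_of_nonneg hz.ge, habs z hz, abs_of_pos hz']
      simp
    have h4 : (csqrt w).im = 0 := by
      rw [csqrt_im_of_nonneg hw.ge, habs w hw, abs_of_pos hw']
      simp
    rw [h3, h4]; nlinarith [mul_pos h1 h2]
  · -- both negative real
    have h1 : (csqrt z).re = 0 := by
      rw [csqrt_re, habs z hz, abs_of_neg hz']
      simp [show (-z.re + z.re)/2 = 0 by ring]
    have h2 : (csqrt w).re = 0 := by
      rw [csqrt_re, habs w hw, abs_of_neg hw']
      simp [show (-w.re + w.re)/2 = 0 by ring]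
    have h3 : 0 < (csqrt z).im := by
      rw [csqrt_im_of_nonneg hz.ge, habs z hz, abs_of_neg hz']
      exact Real.sqrt_pos.2 (by linarith)
    have h4 : 0 < (csqrt w).im := by
      rw [csqrt_im_of_nonneg hw.ge, habs w hw, abs_of_neg hw']
      exact Real.sqrt_pos.2 (by linarith)
    rw [h1, h2]; nlinarith [mul_pos h3 h4]

lemma sqrtc_sq {c : ℝ} (hc0 : 0 < c) (w : ℂ) : sqrtc c w ^ 2 = w^2 + 2*c := by
  have h1 := csqrt_sq (-(Real.sqrt (2*c) : ℂ) - Complex.I * w)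
  have h2 := csqrt_sq ((Real.sqrt (2*c) : ℂ) - Complex.I * w)
  have ha2 : ((Real.sqrt (2*c) : ℝ):ℂ)^2 = 2*c := by
    rw [← Complex.ofReal_pow, Real.sq_sqrt (by linarith : (0:ℝ) ≤ 2*c)]
    push_cast; ring
  unfold sqrtc
  have expand : (Complex.I * csqrt (-(Real.sqrt (2*c) : ℂ) - Complex.I * w) *
      csqrt ((Real.sqrt (2*c) : ℂ) - Complex.I * w))^2
      = Complex.I^2 * (csqrt (-(Real.sqrt (2*c) : ℂ) - Complex.I * w))^2 *
        (csqrt ((Real.sqrt (2*c) : ℂ) - Complex.I * w))^2 := by ring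
  rw [expand, h1, h2, Complex.I_sq]
  linear_combination ha2 - w^2 * Complex.I_sq

lemma sqrt_half (c : ℝ) (hc0 : 0 < c) : Real.sqrt (c/2) = Real.sqrt (2*c) / 2 := by
  rw [show c/2 = (2*c)/4 by ring, Real.sqrt_div (by linarith : (0:ℝ) ≤ 2*c),
    show (4:ℝ) = 2^2 by norm_num, Real.sqrt_sq (by norm_num : (0:ℝ) ≤ 2)]

lemma re_conj_mul_sqrtc_pos {c : ℝ} (hc0 : 0 < c) {w : ℂ} (hw : w ∉ slit c) :
    0 < w.re * (sqrtc c w).re + w.im * (sqrtc c w).im := by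
  set a := Real.sqrt (2*c) with ha_def
  have ha : 0 < a := Real.sqrt_pos.2 (by linarith)
  set p : ℂ := -(a:ℂ) - Complex.I * w with hp_def
  set q : ℂ := (a:ℂ) - Complex.I * w with hq_def
  have hpre : p.re = w.im - a := by simp [hp_def, Complex.mul_re]; ring
  have hpim : p.im = -w.re := by simp [hp_def, Complex.mul_im]
  have hqre : q.re = w.im + a := by simp [hq_def, Complex.mul_re]; ring
  have hqim : q.im = -w.re := by simp [hq_def, Complex.mul_im]
  set α : ℂ := csqrt p with hα_def
  set β : ℂ := csqrt q with hβ_def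
  have hα : α ^ 2 = p := csqrt_sq p
  have hβ : β ^ 2 = q := csqrt_sq q
  have e1 : α.re^2 - α.im^2 = w.im - a := by
    have := congrArg Complex.re hα; simp [pow_two, Complex.mul_re] at this
    rw [hpre] at this; nlinarith [this]
  have e2 : 2*(α.re*α.im) = -w.re := by
    have := congrArg Complex.im hα; simp [pow_two, Complex.mul_im] at this
    rw [hpim] at this; linarith [this]
  have e3 : β.re^2 - β.im^2 = w.im + a := by
    have := congrArg Complex.re hβ; simp [pow_two, Complex.mul_re] at this
    rw [hqre] at this; nlinarith [this]
  have e4 : 2*(β.re*β.im) = -w.re := by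
    have := congrArg Complex.im hβ; simp [pow_two, Complex.mul_im] at this
    rw [hqim] at this; linarith [this]
  -- the slit condition gives quadrant info
  have hwslit : w.re ≠ 0 ∨ a < w.im ∨ w.im < -a := by
    by_contra h
    push_neg at h
    obtain ⟨h1, h2, h3⟩ := h
    exact hw ⟨w.im, by linarith, h2, by apply Complex.ext <;> simp [h1]⟩
  have hdot : 0 < α.re * β.re + α.im * β.im := by
    apply dot_pos
    rcases lt_trichotomy w.re 0 with hre | hre | hre
    · exact Or.inr (Or.inl ⟨by rw [hpim]; linarith, by rw [hqim]; linarith⟩)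
    · rcases hwslit with h | h | h
      · exact absurd hre h
      · exact Or.inr (Or.inr (Or.inl ⟨by rw [hpim, hre]; ring, by rw [hqim, hre]; ring,
          by rw [hpre]; linarith, by rw [hqre]; linarith⟩))
      · exact Or.inr (Or.inr (Or.inr ⟨by rw [hpim, hre]; ring, by rw [hqim, hre]; ring,
          by rw [hpre]; linarith, by rw [hqre]; linarith⟩))
    · exact Or.inl ⟨by rw [hpim]; linarith, by rw [hqim]; linarith⟩
  have hSre : (sqrtc c w).re = -(α.im*β.re) - α.re*β.im := by
    show (Complex.I * α * β).re = _
    simp [Complex.mul_re, Complex.mul_im]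
    try ring
  have hSim : (sqrtc c w).im = α.re*β.re - α.im*β.im := by
    show (Complex.I * α * β).im = _
    simp [Complex.mul_re, Complex.mul_im]; ring
  have hcon : α.re*α.im = β.re*β.im := by linarith
  have hx : w.re = -2*(α.re*α.im) := by linarith
  have hy : w.im = ((α.re^2 - α.im^2) + (β.re^2 - β.im^2))/2 := by linarith
  have key : w.re * (sqrtc c w).re + w.im * (sqrtc c w).im
      = (α.re^2+α.im^2+β.re^2+β.im^2)/2 * (α.re*β.re + α.im*β.im) := by
    rw [hSre, hSim, hx, hy]
    linear_combination (α.re*β.im + α.im*β.re) * hcon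
  rw [key]
  have hsum : 0 < α.re^2+α.im^2+β.re^2+β.im^2 := by
    nlinarith [sq_nonneg (α.re - β.re), sq_nonneg (α.im - β.im), hdot]
  positivity

-- Part 2: J maps punctured disc off the slit
lemma J_off_slit {c : ℝ} (hc0 : 0 < c) {u : ℂ} (hu : u ∈ punctDisc) :
    Jfun c u ∈ (slit c)ᶜ := by
  obtain ⟨hu0, hu1⟩ := hu
  have hune : u ≠ 0 := by simpa using hu0.ne'
  have hn : 0 < Complex.normSq u := Complex.normSq_pos.2 hune
  have hn1 : Complex.normSq u < 1 := by
    rw [Complex.normSq_eq_norm_sq]; nlinarith [hu0]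
  intro ⟨y, hy1, hy2, hy3⟩
  set k := Real.sqrt (c/2) with hk_def
  have hk : 0 < k := Real.sqrt_pos.2 (by linarith)
  have hre : (Jfun c u).re = k * (u.re - u.re / Complex.normSq u) := by
    rw [Jfun, Complex.re_ofReal_mul, Complex.sub_re, one_div, Complex.inv_re]
  have him : (Jfun c u).im = k * (u.im + u.im / Complex.normSq u) := by
    rw [Jfun, Complex.im_ofReal_mul, Complex.sub_im, one_div, Complex.inv_im]
    ring
  have hre0 : (Jfun c u).re = 0 := by rw [hy3]; simp
  have hure : u.re = 0 := by
    rw [hre] at hre0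
    rcases mul_eq_zero.1 hre0 with h | h
    · exact absurd h hk.ne'
    · have h' : u.re * (Complex.normSq u - 1) = 0 := by
        field_simp at h
        linear_combination h
      rcases mul_eq_zero.1 h' with h'' | h''
      · exact h''
      · linarith
  have hnu : Complex.normSq u = u.im^2 := by
    rw [Complex.normSq_apply, hure]; ring
  have ht : u.im ≠ 0 := by
    intro h; rw [hnu, h] at hn; simp at hn
  have himval : (Jfun c u).im = k * (u.im + 1/u.im) := by
    rw [him, hnu]; congr 1; field_simp
  have himy : (Jfun c u).im = y := by rw [hy3]; simp
  have habs : |(Jfun c u).im| ≤ Real.sqrt (2*c) := by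
    rw [himy]; exact abs_le.2 ⟨hy1, hy2⟩
  have h2k : Real.sqrt (2*c) = 2*k := by rw [hk_def, sqrt_half c hc0]; ring
  have htabs : |u.im| < 1 := by nlinarith [hn1, hnu, abs_nonneg u.im, sq_abs u.im]
  have htpos : 0 < |u.im| := abs_pos.2 ht
  have hval : |u.im + 1/u.im| = (u.im^2+1)/|u.im| := by
    rw [show u.im + 1/u.im = (u.im^2+1)/u.im by field_simp, abs_div,
      abs_of_pos (by positivity : (0:ℝ) < u.im^2+1)]
  rw [himval, abs_mul, abs_of_pos hk, h2k, hval] at habs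
  have hle : u.im^2 + 1 ≤ 2*|u.im| := by
    rw [show 2*k = k*2 by ring] at habs
    have h2 := le_of_mul_le_mul_left habs hk
    have := (div_le_iff₀ htpos).1 h2
    linarith
  nlinarith [sq_abs u.im, htabs, htpos]

-- Part 3
lemma G_props {c : ℝ} (hc0 : 0 < c) {w : ℂ} (hw : w ∈ (slit c)ᶜ) :
    Gfun c w ∈ punctDisc ∧ Jfun c (Gfun c w) = w := by
  set a := Real.sqrt (2*c) with ha_def
  have ha : 0 < a := Real.sqrt_pos.2 (by linarith)
  have haC : (a:ℂ) ≠ 0 := by exact_mod_cast ha.ne'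
  have hA2 : (a:ℂ)^2 = 2*c := by
    rw [← Complex.ofReal_pow, ha_def, Real.sq_sqrt (by linarith : (0:ℝ) ≤ 2*c)]
    push_cast; ring
  set S := sqrtc c w with hS_def
  have hS2 : S^2 = w^2 + 2*c := sqrtc_sq hc0 w
  have h2c : ((2:ℂ)*c) ≠ 0 := by
    simp only [ne_eq, mul_eq_zero]
    push_neg
    exact ⟨two_ne_zero, by exact_mod_cast hc0.ne'⟩
  have hprod : (w - S) * (w + S) = -(2*c) := by linear_combination -hS2
  have hm : w - S ≠ 0 := by
    intro h; rw [h, zero_mul] at hprod; exact h2c (neg_eq_zero.1 hprod.symm)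
  have hp : w + S ≠ 0 := by
    intro h; rw [h, mul_zero] at hprod; exact h2c (neg_eq_zero.1 hprod.symm)
  have hG : Gfun c w = (a:ℂ)⁻¹ * (w - S) := rfl
  have hGne : Gfun c w ≠ 0 := by
    rw [hG]; exact mul_ne_zero (inv_ne_zero haC) hm
  -- modulus comparison
  have hdot := re_conj_mul_sqrtc_pos hc0 (by simpa using hw)
  have hns : Complex.normSq (w - S) < Complex.normSq (w + S) := by
    simp only [Complex.normSq_apply, Complex.sub_re, Complex.sub_im, Complex.add_re,
      Complex.add_im]
    nlinarith [hdot]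
  have habs : ‖(w - S)‖ < ‖(w + S)‖ := by
    rw [Complex.norm_def, Complex.norm_def]
    exact Real.sqrt_lt_sqrt (Complex.normSq_nonneg _) hns
  have habsprod : ‖(w - S)‖ * ‖(w + S)‖ = 2*c := by
    rw [← norm_mul, hprod, show -(2*(c:ℂ)) = ((-(2*c):ℝ):ℂ) by push_cast; ring,
      Complex.norm_real, Real.norm_eq_abs, abs_of_nonpos (by linarith)]
    ring
  have hG1 : ‖(Gfun c w)‖ < 1 := by
    rw [hG, norm_mul, norm_inv, Complex.norm_real, Real.norm_eq_abs, abs_of_pos ha]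
    have h1 : ‖(w - S)‖ ^ 2 < 2*c := by
      nlinarith [norm_nonneg (w - S), habs, habsprod]
    have ha2' : a^2 = 2*c := Real.sq_sqrt (by linarith)
    rw [inv_mul_eq_div, div_lt_one ha]
    nlinarith [norm_nonneg (w - S)]
  have hG0 : 0 < ‖(Gfun c w)‖ := by
    simpa [norm_pos_iff] using hGne
  refine ⟨⟨hG0, hG1⟩, ?_⟩
  -- J(G(w)) = w
  have hk : (Real.sqrt (c/2) : ℂ) = (a:ℂ)/2 := by
    rw [sqrt_half c hc0, ha_def]; push_cast; ring
  rw [Jfun, hk, hG]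
  have hmul : ((a:ℂ)⁻¹ * (w - S)) * (-((a:ℂ)⁻¹ * (w + S))) = 1 := by
    have h1 : ((a:ℂ)⁻¹ * (w - S)) * (-((a:ℂ)⁻¹ * (w + S)))
        = -((w - S) * (w + S)) * (((a:ℂ))⁻¹ * ((a:ℂ))⁻¹) := by ring
    rw [h1, hprod, neg_neg, show ((a:ℂ))⁻¹ * ((a:ℂ))⁻¹ = ((a:ℂ)^2)⁻¹ by
      rw [sq, mul_inv], hA2]
    exact mul_inv_cancel₀ h2c
  have hGinv : (1:ℂ) / ((a:ℂ)⁻¹ * (w - S)) = -((a:ℂ)⁻¹ * (w + S)) :=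
    (eq_one_div_of_mul_eq_one_left (by rw [mul_comm] at hmul; exact hmul)).symm
  rw [hGinv]
  have h2 : ((a:ℂ)/2) * ((a:ℂ)⁻¹*(w - S) - -((a:ℂ)⁻¹*(w + S))) = ((a:ℂ) * (a:ℂ)⁻¹) * w := by
    ring
  rw [h2, mul_inv_cancel₀ haC, one_mul]

lemma J_analytic (c : ℝ) : AnalyticOn ℂ (Jfun c) punctDisc := by
  intro u hu
  have hune : u ≠ 0 := by
    intro h; rw [h] at hu; exact lt_irrefl 0 (by simpa using hu.1)
  exact (analyticAt_const.mul ((analyticAt_id).sub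
    (analyticAt_const.div analyticAt_id hune))).analyticWithinAt

lemma J_inj {c : ℝ} (hc0 : 0 < c) {u v : ℂ} (hu : u ∈ punctDisc) (hv : v ∈ punctDisc)
    (h : Jfun c v = Jfun c u) : v = u := by
  have hk : (Real.sqrt (c/2) : ℂ) ≠ 0 := by
    exact_mod_cast (Real.sqrt_pos.2 (by linarith : (0:ℝ) < c/2)).ne'
  have hune : u ≠ 0 := by
    intro hh; rw [hh] at hu; exact lt_irrefl 0 (by simpa using hu.1)
  have hvne : v ≠ 0 := by
    intro hh; rw [hh] at hv; exact lt_irrefl 0 (by simpa using hv.1)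
  have heq : v - 1/v = u - 1/u := mul_left_cancel₀ hk h
  have hfac : (v - u) * (u*v + 1) = 0 := by
    field_simp at heq
    linear_combination heq
  rcases mul_eq_zero.1 hfac with h1 | h1
  · exact sub_eq_zero.1 h1
  · exfalso
    have huv : u * v = -1 := by linear_combination h1
    have : ‖(u*v)‖ = 1 := by rw [huv]; simp
    rw [norm_mul] at this
    nlinarith [hu.1, hu.2, hv.1, hv.2]

theorem stmt7 (c : ℝ) (hc0 : 0 < c) (hc : c < 1/2) :
    AnalyticOn ℂ (Jfun c) punctDisc ∧
    (∀ u ∈ punctDisc, Jfun c u ∈ (slit c)ᶜ) ∧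
    (∀ w ∈ (slit c)ᶜ, Gfun c w ∈ punctDisc ∧ Jfun c (Gfun c w) = w) ∧
    (∀ u ∈ punctDisc, Gfun c (Jfun c u) = u) := by
  refine ⟨J_analytic c, fun u hu => J_off_slit hc0 hu, fun w hw => G_props hc0 hw,
    fun u hu => ?_⟩
  obtain ⟨hv, hJv⟩ := G_props hc0 (J_off_slit hc0 hu)
  exact J_inj hc0 hu hv hJv

end
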